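/- Let A be an n×n real symmetric positive definite matrix and M an n×n real matrix such that M + Mᵀ - A is symmetric positive definite. Then the operator norm of I - M⁻¹A in the A-inner product satisfies ‖I - M⁻¹A‖_A < 1. -/

import Mathlib

open Matrix

/-- The `A`-norm of a vector, `‖v‖_A = √(vᵀ A v)`. -/
noncomputable def anorm {n : ℕ} (A : Matrix (Fin n) (Fin n) ℝ) (v : Fin n → ℝ) : ℝ :=
  Real.sqrt (v ⬝ᵥ A.mulVec v)

/-- The operator norm of a matrix `E` induced by the `A`-norm. -/
noncomputable def opNormA {n : ℕ} (A E : Matrix (Fin n) (Fin n) ℝ) : ℝ :=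
  ⨆ v : {v : Fin n → ℝ // v ≠ 0}, anorm A (E.mulVec v) / anorm A v

private lemma quad_smul {n : ℕ} (B : Matrix (Fin n) (Fin n) ℝ) (c : ℝ) (x : Fin n → ℝ) :
    (c • x) ⬝ᵥ B.mulVec (c • x) = c ^ 2 * (x ⬝ᵥ B.mulVec x) := by
  simp [Matrix.mulVec_smul, dotProduct_smul, smul_dotProduct, smul_eq_mul]
  ring

private lemma quad_cont {n : ℕ} (B : Matrix (Fin n) (Fin n) ℝ) :
    Continuous fun x : Fin n → ℝ => x ⬝ᵥ B.mulVec x :=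
  continuous_id.dotProduct (continuous_const.matrix_mulVec continuous_id)

/-- Comparison of two positive definite quadratic forms. -/
private lemma quad_compare {n : ℕ} {B C : Matrix (Fin n) (Fin n) ℝ}
    (hB : B.PosDef) (hC : C.PosDef) :
    ∃ ε > (0:ℝ), ∀ x : Fin n → ℝ, ε * (x ⬝ᵥ C.mulVec x) ≤ x ⬝ᵥ B.mulVec x := by
  rcases Nat.eq_zero_or_pos n with hn | hn
  · subst hn
    exact ⟨1, one_pos, fun x => by simp [dotProduct]⟩
  haveI : Nonempty (Fin n) := ⟨⟨0, hn⟩⟩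
  have hS : IsCompact (Metric.sphere (0 : Fin n → ℝ) 1) := isCompact_sphere _ _
  have hSne : (Metric.sphere (0 : Fin n → ℝ) 1).Nonempty :=
    NormedSpace.sphere_nonempty.2 zero_le_one
  obtain ⟨a, haS, ha⟩ := hS.exists_isMinOn hSne (quad_cont B).continuousOn
  obtain ⟨b, hbS, hb⟩ := hS.exists_isMaxOn hSne (quad_cont C).continuousOn
  have ha0 : a ≠ 0 := by
    intro h; rw [h] at haS; simpa using haS
  have hb0 : b ≠ 0 := by
    intro h; rw [h] at hbS; simpa using hbS
  have hm : 0 < a ⬝ᵥ B.mulVec a := by simpa only [star_trivial] using hB.dotProduct_mulVec_pos ha0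
  have hMx : 0 < b ⬝ᵥ C.mulVec b := by simpa only [star_trivial] using hC.dotProduct_mulVec_pos hb0
  refine ⟨(a ⬝ᵥ B.mulVec a) / (b ⬝ᵥ C.mulVec b), div_pos hm hMx, fun x => ?_⟩
  rcases eq_or_ne x 0 with rfl | hx
  · simp
  · have hxn : (0:ℝ) < ‖x‖ := norm_pos_iff.2 hx
    set u : Fin n → ℝ := ‖x‖⁻¹ • x with hu
    have huS : u ∈ Metric.sphere (0 : Fin n → ℝ) 1 := by
      simp [hu, norm_smul, abs_of_pos (inv_pos.2 hxn), inv_mul_cancel₀ hxn.ne']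
    have hxu : x = ‖x‖ • u := by
      rw [hu, smul_smul, mul_inv_cancel₀ hxn.ne', one_smul]
    have hBx : x ⬝ᵥ B.mulVec x = ‖x‖ ^ 2 * (u ⬝ᵥ B.mulVec u) := by
      conv_lhs => rw [hxu]
      exact quad_smul B _ u
    have hCx : x ⬝ᵥ C.mulVec x = ‖x‖ ^ 2 * (u ⬝ᵥ C.mulVec u) := by
      conv_lhs => rw [hxu]
      exact quad_smul C _ u
    have h1 : a ⬝ᵥ B.mulVec a ≤ u ⬝ᵥ B.mulVec u := ha huS
    have h2 : u ⬝ᵥ C.mulVec u ≤ b ⬝ᵥ C.mulVec b := hb huS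
    rw [hBx, hCx, div_mul_eq_mul_div, div_le_iff₀ hMx]
    have hsq : (0:ℝ) ≤ ‖x‖ ^ 2 := sq_nonneg _
    calc a ⬝ᵥ B.mulVec a * (‖x‖ ^ 2 * (u ⬝ᵥ C.mulVec u))
        ≤ a ⬝ᵥ B.mulVec a * (‖x‖ ^ 2 * (b ⬝ᵥ C.mulVec b)) := by
          apply mul_le_mul_of_nonneg_left _ hm.le
          exact mul_le_mul_of_nonneg_left h2 hsq
      _ = ‖x‖ ^ 2 * (a ⬝ᵥ B.mulVec a) * (b ⬝ᵥ C.mulVec b) := by ring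
      _ ≤ ‖x‖ ^ 2 * (u ⬝ᵥ B.mulVec u) * (b ⬝ᵥ C.mulVec b) := by
          apply mul_le_mul_of_nonneg_right _ hMx.le
          exact mul_le_mul_of_nonneg_left h1 hsq

theorem relaxation_A_convergent {n : ℕ} (A M : Matrix (Fin n) (Fin n) ℝ)
    (hA : A.PosDef) (hM : IsUnit M.det) (hMA : (M + Mᵀ - A).PosDef) :
    opNormA A (1 - M⁻¹ * A) < 1 := by
  have hMunit : IsUnit M := (Matrix.isUnit_iff_isUnit_det M).2 hM
  have hAT : Aᵀ = A := hA.isHermitian.eq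
  have hAinv : A⁻¹.PosDef := hA.inv
  -- C = Mᵀ A⁻¹ M is positive definite
  set C : Matrix (Fin n) (Fin n) ℝ := Mᵀ * A⁻¹ * M with hCdef
  have hMinj : Function.Injective (M.mulVec) :=
    (Matrix.mulVec_injective_iff_isUnit.2 hMunit)
  have hMne : ∀ x : Fin n → ℝ, x ≠ 0 → M.mulVec x ≠ 0 := by
    intro x hx h
    exact hx (hMinj (by simpa using h))
  have hCquad : ∀ x : Fin n → ℝ, x ⬝ᵥ C.mulVec x = (M.mulVec x) ⬝ᵥ A⁻¹.mulVec (M.mulVec x) := by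
    intro x
    rw [hCdef, Matrix.mul_assoc, ← Matrix.mulVec_mulVec, Matrix.dotProduct_mulVec,
      Matrix.vecMul_transpose, ← Matrix.mulVec_mulVec]
  have hC : C.PosDef := by
    refine Matrix.PosDef.of_dotProduct_mulVec_pos ?_ ?_
    · have : Cᴴ = C := by
        rw [hCdef]
        simp only [Matrix.conjTranspose_eq_transpose_of_trivial, Matrix.transpose_mul,
          Matrix.transpose_transpose, Matrix.transpose_nonsing_inv, hAT, Matrix.mul_assoc]
      exact this
    · intro x hx
      simp only [star_trivial]
      rw [hCquad x]
      simpa only [star_trivial] using hAinv.dotProduct_mulVec_pos (hMne x hx)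
  obtain ⟨ε, hε, hkey⟩ := quad_compare hMA hC
  set δ : ℝ := min ε 1 with hδdef
  have hδ0 : 0 < δ := lt_min hε one_pos
  have hδ1 : δ ≤ 1 := min_le_right _ _
  have hδε : δ ≤ ε := min_le_left _ _
  set c : ℝ := Real.sqrt (1 - δ) with hcdef
  have hc1 : c < 1 := by
    rw [hcdef]
    calc Real.sqrt (1 - δ) < Real.sqrt 1 := by
          apply Real.sqrt_lt_sqrt (by linarith) (by linarith)
      _ = 1 := Real.sqrt_one
  -- the bound on each Rayleigh quotient
  have hbound : ∀ v : Fin n → ℝ, v ≠ 0 →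
      anorm A ((1 - M⁻¹ * A).mulVec v) / anorm A v ≤ c := by
    intro v hv
    set w : Fin n → ℝ := M⁻¹.mulVec (A.mulVec v) with hwdef
    have hEv : (1 - M⁻¹ * A).mulVec v = v - w := by
      rw [Matrix.sub_mulVec, Matrix.one_mulVec, hwdef, Matrix.mulVec_mulVec]
    have hMw : M.mulVec w = A.mulVec v := by
      rw [hwdef, Matrix.mulVec_mulVec, Matrix.mul_nonsing_inv M hM, Matrix.one_mulVec]
    have hq : (0:ℝ) < v ⬝ᵥ A.mulVec v := by simpa only [star_trivial] using hA.dotProduct_mulVec_pos hv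
    have hvecA : ∀ u : Fin n → ℝ, u ᵥ* A = A.mulVec u := by
      intro u
      conv_lhs => rw [← hAT, Matrix.vecMul_transpose]
    have hcross : v ⬝ᵥ A.mulVec w = w ⬝ᵥ M.mulVec w := by
      rw [Matrix.dotProduct_mulVec, hvecA v, ← hMw]
      exact dotProduct_comm _ _
    have hwAv : w ⬝ᵥ A.mulVec v = w ⬝ᵥ M.mulVec w := by rw [hMw]
    have hMTw : w ⬝ᵥ Mᵀ.mulVec w = w ⬝ᵥ M.mulVec w := by
      rw [Matrix.dotProduct_mulVec, Matrix.vecMul_transpose]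
      exact dotProduct_comm _ _
    have hiii : (v - w) ⬝ᵥ A.mulVec (v - w)
        = v ⬝ᵥ A.mulVec v - w ⬝ᵥ (M + Mᵀ - A).mulVec w := by
      simp only [Matrix.mulVec_sub, Matrix.sub_mulVec, Matrix.add_mulVec,
        dotProduct_sub, sub_dotProduct, dotProduct_add]
      rw [hcross, hwAv, hMTw]
      ring
    have hiv : w ⬝ᵥ C.mulVec w = v ⬝ᵥ A.mulVec v := by
      rw [hCquad w, hMw, Matrix.mulVec_mulVec, Matrix.nonsing_inv_mul A (isUnit_iff_ne_zero.2 hA.det_pos.ne'),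
        Matrix.one_mulVec]
      exact dotProduct_comm _ _
    have hBw : δ * (v ⬝ᵥ A.mulVec v) ≤ w ⬝ᵥ (M + Mᵀ - A).mulVec w := by
      calc δ * (v ⬝ᵥ A.mulVec v) = δ * (w ⬝ᵥ C.mulVec w) := by rw [hiv]
        _ ≤ ε * (w ⬝ᵥ C.mulVec w) := by
            apply mul_le_mul_of_nonneg_right hδε
            rw [hiv]; exact hq.le
        _ ≤ _ := hkey w
    have hEq : (v - w) ⬝ᵥ A.mulVec (v - w) ≤ (1 - δ) * (v ⬝ᵥ A.mulVec v) := by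
      rw [hiii]; nlinarith
    have hav : anorm A v = Real.sqrt (v ⬝ᵥ A.mulVec v) := rfl
    have havpos : 0 < anorm A v := by
      rw [hav]; exact Real.sqrt_pos.2 hq
    rw [div_le_iff₀ havpos, hEv]
    calc anorm A (v - w) = Real.sqrt ((v - w) ⬝ᵥ A.mulVec (v - w)) := rfl
      _ ≤ Real.sqrt ((1 - δ) * (v ⬝ᵥ A.mulVec v)) := Real.sqrt_le_sqrt hEq
      _ = c * anorm A v := by
          rw [Real.sqrt_mul (by linarith), hav, hcdef]
  rcases Nat.eq_zero_or_pos n with hn | hn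
  · subst hn
    haveI : IsEmpty {v : Fin 0 → ℝ // v ≠ 0} :=
      ⟨fun v => v.2 (Subsingleton.elim _ _)⟩
    rw [opNormA, Real.iSup_of_isEmpty]
    exact one_pos
  · haveI : Nonempty {v : Fin n → ℝ // v ≠ 0} := by
      refine ⟨⟨fun _ => 1, ?_⟩⟩
      intro h
      have := congrFun h ⟨0, hn⟩
      simp at this
    have : opNormA A (1 - M⁻¹ * A) ≤ c := by
      apply ciSup_le
      intro v
      exact hbound v.1 v.2
    exact lt_of_le_of_lt this hc1
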